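/- (Identification of weak limits of cell-problem solutions.) Let ξ_j → ξ in M, and for each j let v_{ξ_j} ∈ S solve the cell problem for ξ_j. Assume sup_j ∫_Ω |v_{ξ_j}(ω)|^{p(ω)} dP(ω) < ∞, and assume there is η ∈ S such that ∫_Ω v_{ξ_j}(ω)·θ(ω) dP(ω) → ∫_Ω η(ω)·θ(ω) dP(ω) for every measurable θ : Ω → M with ∫_Ω |θ(ω)|^{p'(ω)} dP(ω) < ∞. Then η solves the cell problem for ξ: ∫_Ω A(ω, ξ + η(ω))·θ(ω) dP(ω) = 0 for every θ ∈ S. In particular η coincides P-almost surely with the unique solution v_ξ of the cell problem for ξ. -/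

import Mathlib

open MeasureTheory ENNReal NNReal
open scoped RealInnerProductSpace NNReal

/-- `Md d`: the space of symmetric `d × d` real matrices, identified (as in the paper)
with the Euclidean space `ℝ^{d(d+1)/2}`. -/
abbrev Md (d : ℕ) : Type := EuclideanSpace ℝ (Fin (d * (d + 1) / 2))

set_option maxHeartbeats 1000000 in
/-- identification of weak limits of cell-problem solutions: if
`ξ_j → ξ`, `v_{ξ_j} ∈ S` solve the cell problems for `ξ_j`, are bounded in `L^{p(·)}`,
and converge weakly to `η ∈ S` (tested against all `θ` with finite `p'(·)`-integral),
then `η` solves the cell problem for `ξ`; in particular `η` coincides `P`-a.s. with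
the unique solution of the cell problem for `ξ`. -/
theorem stmt15
    {d : ℕ} (hd : 1 ≤ d)
    {Ω : Type*} [MeasurableSpace Ω] (P : Measure Ω) [IsProbabilityMeasure P]
    (p : Ω → ℝ) (hp : Measurable p)
    (α β : ℝ) (hα : 1 < α) (hαp : ∀ ω, α ≤ p ω) (hpβ : ∀ ω, p ω ≤ β)
    (A : Ω → Md d → Md d)
    (hAmeas : ∀ ξ : Md d, Measurable (fun ω => A ω ξ))
    (hAcont : ∀ ω, Continuous (A ω))
    (hAmono : ∀ ω (ξ₁ ξ₂ : Md d), ξ₁ ≠ ξ₂ → 0 < ⟪A ω ξ₁ - A ω ξ₂, ξ₁ - ξ₂⟫)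
    (c₁ : ℝ) (hc₁ : 0 < c₁)
    (hAgrowth : ∀ ω (ξ : Md d), ‖A ω ξ‖ ^ (p ω / (p ω - 1)) ≤ c₁ * ‖ξ‖ ^ p ω + c₁)
    -- `S` is a linear subspace of the measurable functions `Ω → M` with finite
    -- `p(⬝)`-integral and zero mean:
    (S : Set (Ω → Md d))
    (hSmeas : ∀ w ∈ S, Measurable w)
    (hSfin : ∀ w ∈ S, ∫⁻ ω, ENNReal.ofReal (‖w ω‖ ^ p ω) ∂P < ⊤)
    (hSzero : (0 : Ω → Md d) ∈ S)
    (hSadd : ∀ w₁ ∈ S, ∀ w₂ ∈ S, w₁ + w₂ ∈ S)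
    (hSsmul : ∀ (r : ℝ), ∀ w ∈ S, r • w ∈ S)
    (hSmean : ∀ w ∈ S, ∫ ω, w ω ∂P = 0)
    (ξs : ℕ → Md d) (ξ : Md d) (hξs : Filter.Tendsto ξs Filter.atTop (nhds ξ))
    (vs : ℕ → (Ω → Md d)) (hvsS : ∀ j, vs j ∈ S)
    (hvsol : ∀ j : ℕ, ∀ θ ∈ S, ∫ ω, ⟪A ω (ξs j + vs j ω), θ ω⟫ ∂P = 0)
    (hbdd : ∃ C : ℝ≥0, ∀ j, ∫⁻ ω, ENNReal.ofReal (‖vs j ω‖ ^ p ω) ∂P ≤ C)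
    (η : Ω → Md d) (hη : η ∈ S)
    (hweak : ∀ θ : Ω → Md d, Measurable θ →
      (∫⁻ ω, ENNReal.ofReal (‖θ ω‖ ^ (p ω / (p ω - 1))) ∂P < ⊤) →
      Filter.Tendsto (fun j => ∫ ω, ⟪vs j ω, θ ω⟫ ∂P) Filter.atTop
        (nhds (∫ ω, ⟪η ω, θ ω⟫ ∂P))) :
    (∀ θ ∈ S, ∫ ω, ⟪A ω (ξ + η ω), θ ω⟫ ∂P = 0)
    ∧ ∀ v ∈ S, (∀ θ ∈ S, ∫ ω, ⟪A ω (ξ + v ω), θ ω⟫ ∂P = 0) → η =ᵐ[P] v := by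
  classical
  -- Ω is nonempty (P is a probability measure)
  obtain ⟨ω₀⟩ : Nonempty Ω := by
    by_contra h
    rw [not_nonempty_iff] at h
    have h1 : P Set.univ = 1 := measure_univ
    rw [Set.univ_eq_empty_iff.mpr h, measure_empty] at h1
    exact zero_ne_one h1
  have hβ1 : (1:ℝ) < β := hα.trans_le ((hαp ω₀).trans (hpβ ω₀))
  have hβ0 : (0:ℝ) ≤ β := by linarith
  have hp1 : ∀ ω, 1 < p ω := fun ω => hα.trans_le (hαp ω)
  have hp0 : ∀ ω, 0 < p ω := fun ω => lt_trans one_pos (hp1 ω)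
  have hconj : ∀ ω, (p ω).HolderConjugate (p ω / (p ω - 1)) := fun ω =>
    (Real.holderConjugate_iff_eq_conjExponent (hp1 ω)).2 rfl
  have hq1 : ∀ ω, 1 < p ω / (p ω - 1) := fun ω => (hconj ω).symm.lt
  have hqmeas : Measurable fun ω => p ω / (p ω - 1) := hp.div (hp.sub measurable_const)
  have hηmeas : Measurable η := hSmeas η hη
  -- closure of S under subtraction
  have hSsub : ∀ w₁ ∈ S, ∀ w₂ ∈ S, w₁ - w₂ ∈ S := by
    intro w₁ h₁ w₂ h₂
    have h := hSadd w₁ h₁ _ (hSsmul (-1) w₂ h₂)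
    rw [show w₁ + (-1:ℝ) • w₂ = w₁ - w₂ by rw [neg_one_smul, ← sub_eq_add_neg]] at h
    exact h
  -- pointwise growth bound on `A`
  have hA_le : ∀ ω (ζ : Md d), ‖A ω ζ‖ ≤ 1 + (c₁ * ‖ζ‖ ^ p ω + c₁) := by
    intro ω ζ
    have h0 : (0:ℝ) ≤ c₁ * ‖ζ‖ ^ p ω := by positivity
    rcases le_or_gt ‖A ω ζ‖ 1 with h | h
    · linarith
    · have h2 : ‖A ω ζ‖ ≤ ‖A ω ζ‖ ^ (p ω / (p ω - 1)) := by
        nth_rewrite 1 [← Real.rpow_one ‖A ω ζ‖]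
        exact Real.rpow_le_rpow_of_exponent_le h.le (hq1 ω).le
      linarith [hAgrowth ω ζ]
  -- Young's inequality for the inner product
  have hYoung : ∀ ω (a b : Md d), |⟪a, b⟫| ≤ ‖a‖ ^ (p ω / (p ω - 1)) + ‖b‖ ^ p ω := by
    intro ω a b
    have h1 : |⟪a, b⟫| ≤ ‖a‖ * ‖b‖ := abs_real_inner_le_norm a b
    have h2 : ‖a‖ * ‖b‖ ≤ ‖a‖ ^ (p ω / (p ω - 1)) / (p ω / (p ω - 1)) + ‖b‖ ^ p ω / p ω :=
      Real.young_inequality_of_nonneg (norm_nonneg a) (norm_nonneg b) (hconj ω).symm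
    have h3 : ‖a‖ ^ (p ω / (p ω - 1)) / (p ω / (p ω - 1)) ≤ ‖a‖ ^ (p ω / (p ω - 1)) :=
      div_le_self (Real.rpow_nonneg (norm_nonneg a) _) (hq1 ω).le
    have h4 : ‖b‖ ^ p ω / p ω ≤ ‖b‖ ^ p ω :=
      div_le_self (Real.rpow_nonneg (norm_nonneg b) _) (hp1 ω).le
    linarith
  -- a convexity-type bound for powers of sums of three nonnegative numbers
  have hpow3 : ∀ ω (a b c : ℝ), 0 ≤ a → 0 ≤ b → 0 ≤ c →
      (a + b + c) ^ p ω ≤ 3 ^ β * a ^ p ω + 3 ^ β * b ^ p ω + 3 ^ β * c ^ p ω := by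
    intro ω a b c ha hb hc
    have hm0 : 0 ≤ max a (max b c) := le_trans ha (le_max_left _ _)
    have h1 : a + b + c ≤ 3 * max a (max b c) := by
      have h1a := le_max_left a (max b c)
      have h1b := (le_max_left b c).trans (le_max_right a (max b c))
      have h1c := (le_max_right b c).trans (le_max_right a (max b c))
      linarith
    have h2 : (a + b + c) ^ p ω ≤ (3 * max a (max b c)) ^ p ω :=
      Real.rpow_le_rpow (by linarith) h1 (hp0 ω).le
    have h3 : (3 * max a (max b c)) ^ p ω = 3 ^ p ω * max a (max b c) ^ p ω :=
      Real.mul_rpow (by norm_num) hm0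
    have h4 : (3:ℝ) ^ p ω ≤ 3 ^ β :=
      Real.rpow_le_rpow_of_exponent_le (by norm_num) (hpβ ω)
    have h5 : max a (max b c) ^ p ω ≤ a ^ p ω + b ^ p ω + c ^ p ω := by
      rcases max_choice a (max b c) with h | h
      · rw [h]
        have := Real.rpow_nonneg hb (p ω); have := Real.rpow_nonneg hc (p ω); linarith
      · rw [h]
        rcases max_choice b c with h' | h' <;> rw [h']
        · have := Real.rpow_nonneg ha (p ω); have := Real.rpow_nonneg hc (p ω); linarith
        · have := Real.rpow_nonneg ha (p ω); have := Real.rpow_nonneg hb (p ω); linarith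
    have hmp : 0 ≤ max a (max b c) ^ p ω := Real.rpow_nonneg hm0 _
    have h3β : (0:ℝ) ≤ 3 ^ β := Real.rpow_nonneg (by norm_num) _
    calc (a + b + c) ^ p ω ≤ 3 ^ p ω * max a (max b c) ^ p ω := by rw [← h3]; exact h2
    _ ≤ 3 ^ β * max a (max b c) ^ p ω := mul_le_mul_of_nonneg_right h4 hmp
    _ ≤ 3 ^ β * (a ^ p ω + b ^ p ω + c ^ p ω) := mul_le_mul_of_nonneg_left h5 h3β
    _ = 3 ^ β * a ^ p ω + 3 ^ β * b ^ p ω + 3 ^ β * c ^ p ω := by ring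
  -- bound for powers of constants
  have hconstp : ∀ ω (a : ℝ), 0 ≤ a → a ^ p ω ≤ max 1 a ^ β := by
    intro ω a ha
    calc a ^ p ω ≤ max 1 a ^ p ω :=
          Real.rpow_le_rpow ha (le_max_right 1 a) (hp0 ω).le
    _ ≤ max 1 a ^ β := Real.rpow_le_rpow_of_exponent_le (le_max_left 1 a) (hpβ ω)
  -- joint measurability of `ω ↦ A ω (g ω)`
  have hAjoint : ∀ {g : Ω → Md d}, Measurable g → Measurable fun ω => A ω (g ω) := by
    intro g hg
    have hA : Measurable (Function.uncurry fun (ζ : Md d) (ω : Ω) => A ω ζ) :=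
      measurable_uncurry_of_continuous_of_measurable (fun ω => hAcont ω) (fun ζ => hAmeas ζ)
    exact hA.comp (hg.prodMk measurable_id)
  -- integrability of the variable-exponent power of a function with finite lintegral
  have hInt_pow_of_fin : ∀ {g : Ω → Md d}, Measurable g →
      (∫⁻ ω, ENNReal.ofReal (‖g ω‖ ^ p ω) ∂P) < ⊤ →
      Integrable (fun ω => ‖g ω‖ ^ p ω) P := by
    intro g hg hfin
    refine ⟨(hg.norm.pow hp).aestronglyMeasurable, ?_⟩
    rw [hasFiniteIntegral_iff_ofReal
      (ae_of_all _ fun ω => Real.rpow_nonneg (norm_nonneg _) _)]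
    exact hfin
  have hIntS : ∀ w ∈ S, Integrable (fun ω => ‖w ω‖ ^ p ω) P := fun w hw =>
    hInt_pow_of_fin (hSmeas w hw) (hSfin w hw)
  -- integrability of `‖c + w‖^p` for `w ∈ S`
  have hIntCS : ∀ (c : Md d), ∀ w ∈ S, Integrable (fun ω => ‖c + w ω‖ ^ p ω) P := by
    intro c w hw
    have hwm := hSmeas w hw
    refine Integrable.mono' (g := fun ω => 3 ^ β * max 1 ‖c‖ ^ β + 3 ^ β * ‖w ω‖ ^ p ω)
      ((integrable_const _).add ((hIntS w hw).const_mul _))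
      (((measurable_const.add hwm).norm.pow hp).aestronglyMeasurable)
      (ae_of_all _ fun ω => ?_)
    rw [Real.norm_eq_abs, abs_of_nonneg (Real.rpow_nonneg (norm_nonneg _) _)]
    have h1 : ‖c + w ω‖ ^ p ω ≤ (‖c‖ + ‖w ω‖ + 0) ^ p ω :=
      Real.rpow_le_rpow (norm_nonneg _) (by simpa using norm_add_le c (w ω)) (hp0 ω).le
    have h2 := hpow3 ω ‖c‖ ‖w ω‖ 0 (norm_nonneg _) (norm_nonneg _) le_rfl
    rw [Real.zero_rpow (hp0 ω).ne'] at h2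
    have h3 := hconstp ω ‖c‖ (norm_nonneg _)
    have h4 : (0:ℝ) ≤ (3:ℝ) ^ β := Real.rpow_nonneg (by norm_num) _
    have h5 := mul_le_mul_of_nonneg_left h3 h4
    linarith
  -- Bochner integrability of `A ∘ g`
  have hIntA : ∀ {g : Ω → Md d}, Measurable g → Integrable (fun ω => ‖g ω‖ ^ p ω) P →
      Integrable (fun ω => A ω (g ω)) P := by
    intro g hg hgi
    refine Integrable.mono' (g := fun ω => 1 + (c₁ * ‖g ω‖ ^ p ω + c₁))
      ((integrable_const 1).add ((hgi.const_mul c₁).add (integrable_const c₁)))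
      (hAjoint hg).aestronglyMeasurable (ae_of_all _ fun ω => hA_le ω (g ω))
  -- integrability of the conjugate power of `A ∘ g`
  have hIntAq : ∀ {g : Ω → Md d}, Measurable g → Integrable (fun ω => ‖g ω‖ ^ p ω) P →
      Integrable (fun ω => ‖A ω (g ω)‖ ^ (p ω / (p ω - 1))) P := by
    intro g hg hgi
    refine Integrable.mono' (g := fun ω => c₁ * ‖g ω‖ ^ p ω + c₁)
      ((hgi.const_mul c₁).add (integrable_const c₁))
      (((hAjoint hg).norm.pow hqmeas).aestronglyMeasurable)
      (ae_of_all _ fun ω => ?_)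
    rw [Real.norm_eq_abs, abs_of_nonneg (Real.rpow_nonneg (norm_nonneg _) _)]
    exact hAgrowth ω (g ω)
  -- integrability of inner products against `A ∘ g`
  have hIntInner : ∀ {g h : Ω → Md d}, Measurable g → Integrable (fun ω => ‖g ω‖ ^ p ω) P →
      Measurable h → Integrable (fun ω => ‖h ω‖ ^ p ω) P →
      Integrable (fun ω => ⟪A ω (g ω), h ω⟫) P := by
    intro g h hg hgi hh hhi
    refine Integrable.mono' (g := fun ω => (c₁ * ‖g ω‖ ^ p ω + c₁) + ‖h ω‖ ^ p ω)
      (((hgi.const_mul c₁).add (integrable_const c₁)).add hhi)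
      ((hAjoint hg).inner hh).aestronglyMeasurable (ae_of_all _ fun ω => ?_)
    rw [Real.norm_eq_abs]
    calc |⟪A ω (g ω), h ω⟫| ≤ ‖A ω (g ω)‖ ^ (p ω / (p ω - 1)) + ‖h ω‖ ^ p ω := hYoung ω _ _
    _ ≤ _ := by linarith [hAgrowth ω (g ω)]
  -- uniform L^p bound on the vs j
  obtain ⟨C, hC⟩ := hbdd
  have hVreal : ∀ j, ∫ ω, ‖vs j ω‖ ^ p ω ∂P ≤ (C:ℝ) := by
    intro j
    rw [integral_eq_lintegral_of_nonneg_ae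
      (ae_of_all _ fun ω => Real.rpow_nonneg (norm_nonneg _) _)
      (((hSmeas _ (hvsS j)).norm.pow hp).aestronglyMeasurable)]
    have h := ENNReal.toReal_mono (by simp) (hC j)
    simpa using h
  -- uniform bound on ‖ξs j‖
  obtain ⟨R, hR⟩ : ∃ R : ℝ, ∀ j, ‖ξs j‖ ≤ R := by
    obtain ⟨R, hR⟩ := (hξs.norm).bddAbove_range
    exact ⟨R, fun j => hR ⟨j, rfl⟩⟩
  -- pointwise bound for ‖ξs j + vs j ω‖^p
  have hptj : ∀ j ω, ‖ξs j + vs j ω‖ ^ p ω ≤ 3 ^ β * max 1 R ^ β + 3 ^ β * ‖vs j ω‖ ^ p ω := by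
    intro j ω
    have h1 : ‖ξs j + vs j ω‖ ^ p ω ≤ (‖ξs j‖ + ‖vs j ω‖ + 0) ^ p ω :=
      Real.rpow_le_rpow (norm_nonneg _) (by simpa using norm_add_le _ _) (hp0 ω).le
    have h2 := hpow3 ω ‖ξs j‖ ‖vs j ω‖ 0 (norm_nonneg _) (norm_nonneg _) le_rfl
    rw [Real.zero_rpow (hp0 ω).ne'] at h2
    have h3 : ‖ξs j‖ ^ p ω ≤ max 1 R ^ β := by
      calc ‖ξs j‖ ^ p ω ≤ max 1 ‖ξs j‖ ^ β := hconstp ω _ (norm_nonneg _)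
      _ ≤ max 1 R ^ β := Real.rpow_le_rpow (le_trans zero_le_one (le_max_left _ _))
            (max_le_max le_rfl (hR j)) hβ0
    have h4 : (0:ℝ) ≤ (3:ℝ) ^ β := Real.rpow_nonneg (by norm_num) _
    have h5 := mul_le_mul_of_nonneg_left h3 h4
    linarith
  have hIntVj : ∀ j, Integrable (fun ω => ‖ξs j + vs j ω‖ ^ p ω) P := fun j =>
    Integrable.mono' ((integrable_const _).add ((hIntS _ (hvsS j)).const_mul _))
      (((measurable_const.add (hSmeas _ (hvsS j))).norm.pow hp).aestronglyMeasurable)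
      (ae_of_all _ fun ω => by
        rw [Real.norm_eq_abs, abs_of_nonneg (Real.rpow_nonneg (norm_nonneg _) _)]
        exact hptj j ω)
  have hAjint : ∀ j, Integrable (fun ω => A ω (ξs j + vs j ω)) P := fun j =>
    hIntA (measurable_const.add (hSmeas _ (hvsS j))) (hIntVj j)
  -- uniform bound on the integrals of A along the sequence
  have hMbound : ∀ j, ‖∫ ω, A ω (ξs j + vs j ω) ∂P‖ ≤
      1 + c₁ + c₁ * (3 ^ β * max 1 R ^ β + 3 ^ β * (C:ℝ)) := by
    intro j
    have h1 : ‖∫ ω, A ω (ξs j + vs j ω) ∂P‖ ≤ ∫ ω, ‖A ω (ξs j + vs j ω)‖ ∂P :=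
      norm_integral_le_integral_norm _
    have h2 : ∫ ω, ‖A ω (ξs j + vs j ω)‖ ∂P
        ≤ ∫ ω, (1 + (c₁ * ‖ξs j + vs j ω‖ ^ p ω + c₁)) ∂P :=
      integral_mono (hAjint j).norm
        ((integrable_const 1).add (((hIntVj j).const_mul c₁).add (integrable_const c₁)))
        (fun ω => hA_le ω _)
    have h3 : ∫ ω, (1 + (c₁ * ‖ξs j + vs j ω‖ ^ p ω + c₁)) ∂P
        = 1 + (c₁ * ∫ ω, ‖ξs j + vs j ω‖ ^ p ω ∂P + c₁) := by
      have iA : Integrable (fun ω => c₁ * ‖ξs j + vs j ω‖ ^ p ω + c₁) P :=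
        ((hIntVj j).const_mul c₁).add (integrable_const c₁)
      rw [integral_add (integrable_const 1) iA,
        integral_add ((hIntVj j).const_mul c₁) (integrable_const c₁),
        integral_const_mul, integral_const, integral_const]
      simp [measure_univ]
    have h4 : ∫ ω, ‖ξs j + vs j ω‖ ^ p ω ∂P ≤ 3 ^ β * max 1 R ^ β + 3 ^ β * (C:ℝ) := by
      have h5 : ∫ ω, ‖ξs j + vs j ω‖ ^ p ω ∂P
          ≤ ∫ ω, (3 ^ β * max 1 R ^ β + 3 ^ β * ‖vs j ω‖ ^ p ω) ∂P :=
        integral_mono (hIntVj j)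
          ((integrable_const _).add ((hIntS _ (hvsS j)).const_mul _)) (hptj j)
      rw [integral_add (integrable_const _) ((hIntS _ (hvsS j)).const_mul _),
        integral_const, integral_const_mul] at h5
      simp only [measure_univ, probReal_univ, ENNReal.toReal_one, one_smul, smul_eq_mul] at h5
      have h6 : (0:ℝ) ≤ (3:ℝ) ^ β := Real.rpow_nonneg (by norm_num) _
      have h7 := mul_le_mul_of_nonneg_left (hVreal j) h6
      linarith
    have h8 := mul_le_mul_of_nonneg_left h4 hc₁.le
    linarith
  -- ============ the Minty-trick inequality ============
  have hMinty : ∀ w ∈ S, 0 ≤ ∫ ω, ⟪A ω (ξ + w ω), w ω - η ω⟫ ∂P := by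
    intro w hw
    have hwm := hSmeas w hw
    have hξwm : Measurable fun ω => ξ + w ω := measurable_const.add hwm
    have hIw : Integrable (fun ω => ‖ξ + w ω‖ ^ p ω) P := hIntCS ξ w hw
    have hBm : Measurable fun ω => A ω (ξ + w ω) := hAjoint hξwm
    have hBi : Integrable (fun ω => A ω (ξ + w ω)) P := hIntA hξwm hIw
    have hBq : ∫⁻ ω, ENNReal.ofReal (‖A ω (ξ + w ω)‖ ^ (p ω / (p ω - 1))) ∂P < ⊤ :=
      (hIntAq hξwm hIw).lintegral_lt_top
    have hT3 : Filter.Tendsto (fun j => ∫ ω, ⟪vs j ω, A ω (ξ + w ω)⟫ ∂P) Filter.atTop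
        (nhds (∫ ω, ⟪η ω, A ω (ξ + w ω)⟫ ∂P)) := hweak _ hBm hBq
    have hGnn : ∀ j, 0 ≤ ⟪ξs j - ξ, ∫ ω, A ω (ξs j + vs j ω) ∂P⟫
        - ⟪ξs j - ξ, ∫ ω, A ω (ξ + w ω) ∂P⟫
        - ∫ ω, ⟪vs j ω, A ω (ξ + w ω)⟫ ∂P + ∫ ω, ⟪w ω, A ω (ξ + w ω)⟫ ∂P := by
      intro j
      have hvjm := hSmeas _ (hvsS j)
      have hsubS : vs j - w ∈ S := hSsub _ (hvsS j) _ hw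
      have hFnn : ∀ ω, 0 ≤ ⟪A ω (ξs j + vs j ω) - A ω (ξ + w ω),
          (ξs j + vs j ω) - (ξ + w ω)⟫ := by
        intro ω
        rcases eq_or_ne (ξs j + vs j ω) (ξ + w ω) with h | h
        · rw [h]; simp
        · exact (hAmono ω _ _ h).le
      have h0 : 0 ≤ ∫ ω, ⟪A ω (ξs j + vs j ω) - A ω (ξ + w ω),
          (ξs j + vs j ω) - (ξ + w ω)⟫ ∂P := integral_nonneg hFnn
      have hsplit : (fun ω => ⟪A ω (ξs j + vs j ω) - A ω (ξ + w ω),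
            (ξs j + vs j ω) - (ξ + w ω)⟫)
          = fun ω => ⟪ξs j - ξ, A ω (ξs j + vs j ω)⟫
            + ⟪A ω (ξs j + vs j ω), vs j ω - w ω⟫
            - ⟪ξs j - ξ, A ω (ξ + w ω)⟫ - ⟪vs j ω, A ω (ξ + w ω)⟫
            + ⟪w ω, A ω (ξ + w ω)⟫ := by
        funext ω
        have h1 : (ξs j + vs j ω) - (ξ + w ω) = (ξs j - ξ) + (vs j ω - w ω) := by abel
        rw [h1]
        simp only [inner_sub_left, inner_add_left, inner_sub_right, inner_add_right,
          real_inner_comm]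
        ring
      rw [hsplit] at h0
      have i1 : Integrable (fun ω => ⟪ξs j - ξ, A ω (ξs j + vs j ω)⟫) P :=
        Integrable.const_inner _ (hAjint j)
      have i2 : Integrable (fun ω => ⟪A ω (ξs j + vs j ω), vs j ω - w ω⟫) P :=
        hIntInner (measurable_const.add hvjm) (hIntVj j) (hvjm.sub hwm)
          (by simpa [Pi.sub_apply] using hIntS _ hsubS)
      have i3 : Integrable (fun ω => ⟪ξs j - ξ, A ω (ξ + w ω)⟫) P :=
        Integrable.const_inner _ hBi
      have i4 : Integrable (fun ω => ⟪vs j ω, A ω (ξ + w ω)⟫) P :=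
        (hIntInner hξwm hIw hvjm (hIntS _ (hvsS j))).congr
          (ae_of_all _ fun ω => real_inner_comm _ _)
      have i5 : Integrable (fun ω => ⟪w ω, A ω (ξ + w ω)⟫) P :=
        (hIntInner hξwm hIw hwm (hIntS _ hw)).congr
          (ae_of_all _ fun ω => real_inner_comm _ _)
      have i12 : Integrable (fun ω => ⟪ξs j - ξ, A ω (ξs j + vs j ω)⟫
          + ⟪A ω (ξs j + vs j ω), vs j ω - w ω⟫) P := i1.add i2
      have i123 : Integrable (fun ω => ⟪ξs j - ξ, A ω (ξs j + vs j ω)⟫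
          + ⟪A ω (ξs j + vs j ω), vs j ω - w ω⟫
          - ⟪ξs j - ξ, A ω (ξ + w ω)⟫) P := i12.sub i3
      have i1234 : Integrable (fun ω => ⟪ξs j - ξ, A ω (ξs j + vs j ω)⟫
          + ⟪A ω (ξs j + vs j ω), vs j ω - w ω⟫
          - ⟪ξs j - ξ, A ω (ξ + w ω)⟫ - ⟪vs j ω, A ω (ξ + w ω)⟫) P := i123.sub i4
      rw [integral_add i1234 i5, integral_sub i123 i4, integral_sub i12 i3,
        integral_add i1 i2,
        integral_inner (hAjint j), integral_inner hBi] at h0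
      have hcellj : ∫ ω, ⟪A ω (ξs j + vs j ω), vs j ω - w ω⟫ ∂P = 0 := by
        have h := hvsol j _ hsubS
        simpa [Pi.sub_apply] using h
      rw [hcellj] at h0
      linarith
    -- pass to the limit
    have hT1 : Filter.Tendsto (fun j => ⟪ξs j - ξ, ∫ ω, A ω (ξs j + vs j ω) ∂P⟫)
        Filter.atTop (nhds 0) := by
      refine squeeze_zero_norm (a := fun j => ‖ξs j - ξ‖ *
        (1 + c₁ + c₁ * (3 ^ β * max 1 R ^ β + 3 ^ β * (C:ℝ)))) (fun j => ?_) ?_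
      · calc ‖⟪ξs j - ξ, ∫ ω, A ω (ξs j + vs j ω) ∂P⟫‖
            ≤ ‖ξs j - ξ‖ * ‖∫ ω, A ω (ξs j + vs j ω) ∂P‖ := by
              rw [Real.norm_eq_abs]; exact abs_real_inner_le_norm _ _
        _ ≤ _ := mul_le_mul_of_nonneg_left (hMbound j) (norm_nonneg _)
      · have h := ((hξs.sub_const ξ).norm.mul_const
          (1 + c₁ + c₁ * (3 ^ β * max 1 R ^ β + 3 ^ β * (C:ℝ))))
        simpa using h
    have hT2 : Filter.Tendsto (fun j => ⟪ξs j - ξ, ∫ ω, A ω (ξ + w ω) ∂P⟫)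
        Filter.atTop (nhds 0) := by
      have h := Filter.Tendsto.inner (𝕜 := ℝ) (hξs.sub_const ξ)
        (tendsto_const_nhds (x := ∫ ω, A ω (ξ + w ω) ∂P) (f := Filter.atTop (α := ℕ)))
      simpa using h
    have hT4 := ((hT1.sub hT2).sub hT3).add
      (tendsto_const_nhds (x := ∫ ω, ⟪w ω, A ω (ξ + w ω)⟫ ∂P) (f := Filter.atTop (α := ℕ)))
    have hfin := ge_of_tendsto' hT4 hGnn
    -- rewrite the limit
    have hiη : Integrable (fun ω => ⟪η ω, A ω (ξ + w ω)⟫) P :=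
      (hIntInner hξwm hIw hηmeas (hIntS η hη)).congr
        (ae_of_all _ fun ω => real_inner_comm _ _)
    have hiw : Integrable (fun ω => ⟪w ω, A ω (ξ + w ω)⟫) P :=
      (hIntInner hξwm hIw hwm (hIntS _ hw)).congr
        (ae_of_all _ fun ω => real_inner_comm _ _)
    have heq : ∫ ω, ⟪A ω (ξ + w ω), w ω - η ω⟫ ∂P
        = ∫ ω, ⟪w ω, A ω (ξ + w ω)⟫ ∂P - ∫ ω, ⟪η ω, A ω (ξ + w ω)⟫ ∂P := by
      have heq2 : (fun ω => ⟪A ω (ξ + w ω), w ω - η ω⟫)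
          = fun ω => ⟪w ω, A ω (ξ + w ω)⟫ - ⟪η ω, A ω (ξ + w ω)⟫ := by
        funext ω
        rw [inner_sub_right, real_inner_comm (w ω), real_inner_comm (η ω)]
      rw [heq2, integral_sub hiw hiη]
    rw [heq]
    linarith [hfin]
  -- ============ η solves the cell problem for ξ ============
  have hcell : ∀ θ ∈ S, ∫ ω, ⟪A ω (ξ + η ω), θ ω⟫ ∂P = 0 := by
    have key : ∀ θ ∈ S, 0 ≤ ∫ ω, ⟪A ω (ξ + η ω), θ ω⟫ ∂P := by
      intro θ hθ
      have hθm := hSmeas θ hθ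
      -- Step A: positivity for positive t
      have hstep : ∀ t : ℝ, 0 < t →
          0 ≤ ∫ ω, ⟪A ω (ξ + (η ω + t • θ ω)), θ ω⟫ ∂P := by
        intro t ht
        have hwS : (η + t • θ) ∈ S := hSadd η hη _ (hSsmul t θ hθ)
        have h1 := hMinty _ hwS
        simp only [Pi.add_apply, Pi.smul_apply] at h1
        have h2 : ∀ ω : Ω, η ω + t • θ ω - η ω = t • θ ω := fun ω => by abel
        simp only [h2, real_inner_smul_right] at h1
        rw [integral_const_mul] at h1
        nlinarith
      -- Step B: dominated convergence as t → 0
      have hDCT : Filter.Tendsto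
          (fun n : ℕ => ∫ ω, ⟪A ω (ξ + (η ω + (1 / ((n:ℝ) + 1)) • θ ω)), θ ω⟫ ∂P)
          Filter.atTop (nhds (∫ ω, ⟪A ω (ξ + η ω), θ ω⟫ ∂P)) := by
        refine tendsto_integral_of_dominated_convergence
          (bound := fun ω => (c₁ * (3 ^ β * max 1 ‖ξ‖ ^ β + 3 ^ β * ‖η ω‖ ^ p ω
            + 3 ^ β * ‖θ ω‖ ^ p ω) + c₁) + ‖θ ω‖ ^ p ω)
          (fun n => ?_) ?_ (fun n => ae_of_all _ fun ω => ?_) (ae_of_all _ fun ω => ?_)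
        · exact ((hAjoint (measurable_const.add (hηmeas.add (hθm.const_smul (1 / ((n:ℝ) + 1)))))).inner
            hθm).aestronglyMeasurable
        · refine Integrable.add (Integrable.add ?_ (integrable_const c₁)) (hIntS θ hθ)
          refine Integrable.const_mul ?_ c₁
          exact ((integrable_const _).add ((hIntS η hη).const_mul _)).add
            ((hIntS θ hθ).const_mul _)
        · -- the uniform bound
          have htpos : (0:ℝ) < 1 / ((n:ℝ) + 1) := by positivity
          have htle : (1:ℝ) / ((n:ℝ) + 1) ≤ 1 := by
            rw [div_le_one (by positivity)]; linarith [Nat.cast_nonneg (α := ℝ) n]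
          have hn1 : ‖ξ + (η ω + (1 / ((n:ℝ) + 1)) • θ ω)‖ ≤ ‖ξ‖ + ‖η ω‖ + ‖θ ω‖ := by
            have := norm_add_le ξ (η ω + (1 / ((n:ℝ) + 1)) • θ ω)
            have h2 := norm_add_le (η ω) ((1 / ((n:ℝ) + 1)) • θ ω)
            have h3 : ‖(1 / ((n:ℝ) + 1)) • θ ω‖ ≤ ‖θ ω‖ := by
              rw [norm_smul, Real.norm_eq_abs, abs_of_nonneg htpos.le]
              nlinarith [norm_nonneg (θ ω)]
            linarith
          have hy := hYoung ω (A ω (ξ + (η ω + (1 / ((n:ℝ) + 1)) • θ ω))) (θ ω)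
          have hg := hAgrowth ω (ξ + (η ω + (1 / ((n:ℝ) + 1)) • θ ω))
          have hpw : ‖ξ + (η ω + (1 / ((n:ℝ) + 1)) • θ ω)‖ ^ p ω
              ≤ 3 ^ β * max 1 ‖ξ‖ ^ β + 3 ^ β * ‖η ω‖ ^ p ω + 3 ^ β * ‖θ ω‖ ^ p ω := by
            have h1 : ‖ξ + (η ω + (1 / ((n:ℝ) + 1)) • θ ω)‖ ^ p ω
                ≤ (‖ξ‖ + ‖η ω‖ + ‖θ ω‖) ^ p ω :=
              Real.rpow_le_rpow (norm_nonneg _) hn1 (hp0 ω).le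
            have h2 := hpow3 ω ‖ξ‖ ‖η ω‖ ‖θ ω‖ (norm_nonneg _) (norm_nonneg _) (norm_nonneg _)
            have h3 := hconstp ω ‖ξ‖ (norm_nonneg _)
            have h4 : (0:ℝ) ≤ (3:ℝ) ^ β := Real.rpow_nonneg (by norm_num) _
            have h5 := mul_le_mul_of_nonneg_left h3 h4
            linarith
          rw [Real.norm_eq_abs]
          have h6 := mul_le_mul_of_nonneg_left hpw hc₁.le
          linarith
        · -- pointwise convergence
          have ht : Filter.Tendsto (fun n : ℕ => 1 / ((n:ℝ) + 1))
              Filter.atTop (nhds 0) := tendsto_one_div_add_atTop_nhds_zero_nat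
          have harg : Filter.Tendsto (fun n : ℕ => ξ + (η ω + (1 / ((n:ℝ) + 1)) • θ ω))
              Filter.atTop (nhds (ξ + η ω)) := by
            have h := tendsto_const_nhds (x := ξ) (f := Filter.atTop (α := ℕ))
              |>.add ((tendsto_const_nhds (x := η ω) (f := Filter.atTop (α := ℕ))).add
                (ht.smul_const (θ ω)))
            simpa using h
          exact (((hAcont ω).tendsto _).comp harg).inner tendsto_const_nhds
      exact ge_of_tendsto' hDCT fun n => hstep _ (by positivity)
    intro θ hθ
    have h1 := key θ hθ
    have h2 := key ((-1:ℝ) • θ) (hSsmul _ θ hθ)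
    simp only [Pi.smul_apply, real_inner_smul_right, neg_one_mul] at h2
    rw [integral_neg] at h2
    linarith
  refine ⟨hcell, ?_⟩
  -- ============ uniqueness ============
  intro v hv hvcell
  have hvmS : η - v ∈ S := hSsub η hη v hv
  have h1 := hcell _ hvmS
  have h2 := hvcell _ hvmS
  simp only [Pi.sub_apply] at h1 h2
  have hvmeas := hSmeas v hv
  have hsubmeas : Measurable fun ω => η ω - v ω := hηmeas.sub hvmeas
  have hsubint : Integrable (fun ω => ‖η ω - v ω‖ ^ p ω) P := by
    simpa [Pi.sub_apply] using hIntS _ hvmS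
  have iη : Integrable (fun ω => ⟪A ω (ξ + η ω), η ω - v ω⟫) P :=
    hIntInner (measurable_const.add hηmeas) (hIntCS ξ η hη) hsubmeas hsubint
  have iv : Integrable (fun ω => ⟪A ω (ξ + v ω), η ω - v ω⟫) P :=
    hIntInner (measurable_const.add hvmeas) (hIntCS ξ v hv) hsubmeas hsubint
  have hzero : ∫ ω, (⟪A ω (ξ + η ω), η ω - v ω⟫ - ⟪A ω (ξ + v ω), η ω - v ω⟫) ∂P = 0 := by
    rw [integral_sub iη iv, h1, h2, sub_zero]
  have hnn : (0 : Ω → ℝ) ≤ fun ω => ⟪A ω (ξ + η ω), η ω - v ω⟫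
      - ⟪A ω (ξ + v ω), η ω - v ω⟫ := by
    intro ω
    simp only [Pi.zero_apply]
    rcases eq_or_ne (η ω) (v ω) with h | h
    · rw [h]; simp
    · have hne : ξ + η ω ≠ ξ + v ω := fun hc => h (by
        have := add_left_cancel hc; exact this)
      have hm := hAmono ω (ξ + η ω) (ξ + v ω) hne
      rw [show (ξ + η ω) - (ξ + v ω) = η ω - v ω by abel, inner_sub_left] at hm
      linarith
  have hae := (integral_eq_zero_iff_of_nonneg hnn (iη.sub iv)).mp hzero
  filter_upwards [hae] with ω hω
  by_contra hne
  have hne' : ξ + η ω ≠ ξ + v ω := fun hc => hne (add_left_cancel hc)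
  have hm := hAmono ω (ξ + η ω) (ξ + v ω) hne'
  rw [show (ξ + η ω) - (ξ + v ω) = η ω - v ω by abel, inner_sub_left] at hm
  have : ⟪A ω (ξ + η ω), η ω - v ω⟫ - ⟪A ω (ξ + v ω), η ω - v ω⟫ = 0 := hω
  linarith
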